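/- Let 1 < α < 2. There exist constants c ∈ (0,1) and C > 0, depending only on α, such that for every real N ≥ 1, all integers k₂ ≠ k₃ with |k₂| ≤ cN and |k₃| ≤ cN, every ε ∈ (0,1), and every μ ∈ ℝ: #{k ∈ ℤ : |k| > N, |k + k₂ − k₃| ≤ N, and |Φ_{k+k₂−k₃, k₂, k₃} − μ| ≤ N^ε} ≤ C min{ 1 + |k₂ − k₃| , N^ε (1 + N^{2−α}/(1 + |k₂ − k₃|)) }. -/

import Mathlib

/-- The resonance function `Φ_{k₁,k₂,k₃} = |k₁|^α − |k₂|^α + |k₃|^α − |k₁−k₂+k₃|^α`. -/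
noncomputable def resPhi (α : ℝ) (k₁ k₂ k₃ : ℤ) : ℝ :=
  |(k₁ : ℝ)| ^ α - |(k₂ : ℝ)| ^ α + |(k₃ : ℝ)| ^ α - |((k₁ - k₂ + k₃ : ℤ) : ℝ)| ^ α

open Set Real in
lemma psiMono (α : ℝ) (hα₁ : 1 < α) (hα₂ : α < 2) {ℓ B : ℝ} (hℓ : 0 < ℓ) :
    MonotoneOn (fun s : ℝ => α * s ^ (α - 1) - α * (α - 1) * B ^ (α - 2) * s)
      (Set.Icc ℓ B) := by
  have hder : ∀ s ∈ interior (Set.Icc ℓ B),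
      HasDerivAt (fun s : ℝ => α * s ^ (α - 1) - α * (α - 1) * B ^ (α - 2) * s)
        (α * ((α - 1) * s ^ (α - 1 - 1)) - α * (α - 1) * B ^ (α - 2)) s := by
    intro s hs
    rw [interior_Icc] at hs
    have hs0 : s ≠ 0 := ne_of_gt (hℓ.trans hs.1)
    have h1 : HasDerivAt (fun s : ℝ => α * s ^ (α - 1)) (α * ((α - 1) * s ^ (α - 1 - 1))) s :=
      (Real.hasDerivAt_rpow_const (Or.inl hs0)).const_mul α
    have h2 : HasDerivAt (fun s : ℝ => α * (α - 1) * B ^ (α - 2) * s)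
        (α * (α - 1) * B ^ (α - 2)) s := by
      simpa using (hasDerivAt_id s).const_mul (α * (α - 1) * B ^ (α - 2))
    exact h1.sub h2
  apply monotoneOn_of_deriv_nonneg (convex_Icc _ _)
  · intro s hs
    have hs0 : s ≠ 0 := ne_of_gt (hℓ.trans_le hs.1)
    have c1 : ContinuousAt (fun s : ℝ => α * s ^ (α - 1) - α * (α - 1) * B ^ (α - 2) * s) s :=
      ((Real.continuousAt_rpow_const s (α - 1) (Or.inl hs0)).const_mul α).sub
        ((continuous_mul_left (α * (α - 1) * B ^ (α - 2))).continuousAt)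
    exact c1.continuousWithinAt
  · intro s hs
    exact (hder s hs).differentiableAt.differentiableWithinAt
  · intro s hs
    rw [(hder s hs).deriv]
    rw [interior_Icc] at hs
    have hs0 : 0 < s := hℓ.trans hs.1
    have hBs : B ^ (α - 2) ≤ s ^ (α - 2) :=
      Real.rpow_le_rpow_of_nonpos hs0 hs.2.le (by linarith)
    have : α * (α - 1) * B ^ (α - 2) ≤ α * (α - 1) * s ^ (α - 2) := by
      apply mul_le_mul_of_nonneg_left hBs (by nlinarith)
    have he : α - 1 - 1 = α - 2 := by ring
    rw [he]
    linarith

lemma sepLem (α : ℝ) (hα₁ : 1 < α) (hα₂ : α < 2) {N D x y : ℝ} (hN : 1 ≤ N)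
    (hD1 : 1 ≤ D) (hDN : D ≤ N / 2) (hx : x ∈ Set.Icc N (N + D))
    (hy : y ∈ Set.Icc N (N + D)) (hxy : x ≤ y) :
    α * (α - 1) * (3 * N / 2) ^ (α - 2) * D * (y - x) ≤
      (y ^ α - (y - D) ^ α) - (x ^ α - (x - D) ^ α) := by
  have hN0 : (0 : ℝ) < N := lt_of_lt_of_le one_pos hN
  have hcont : ContinuousOn (fun t : ℝ => t ^ α - (t - D) ^ α) (Set.Icc N (N + D)) := by
    intro t ht
    have h1 : t ≠ 0 := by nlinarith [ht.1]
    have h2 : t - D ≠ 0 := by nlinarith [ht.1]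
    have c1 : ContinuousAt (fun t : ℝ => t ^ α - (t - D) ^ α) t := by
      apply ContinuousAt.sub
      · exact Real.continuousAt_rpow_const t α (Or.inl h1)
      · exact ContinuousAt.rpow_const (continuousAt_id.sub continuousAt_const) (Or.inl h2)
    exact c1.continuousWithinAt
  have hder : ∀ t ∈ interior (Set.Icc N (N + D)),
      HasDerivAt (fun t : ℝ => t ^ α - (t - D) ^ α)
        (α * t ^ (α - 1) - 1 * α * (t - D) ^ (α - 1)) t := by
    intro t ht
    rw [interior_Icc] at ht
    have h1 : t ≠ 0 := by nlinarith [ht.1]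
    have h2 : t - D ≠ 0 := by nlinarith [ht.1]
    exact (Real.hasDerivAt_rpow_const (Or.inl h1)).sub
      (((hasDerivAt_id t).sub_const D).rpow_const (Or.inl h2))
  have hdiff : DifferentiableOn ℝ (fun t : ℝ => t ^ α - (t - D) ^ α)
      (interior (Set.Icc N (N + D))) :=
    fun t ht => (hder t ht).differentiableAt.differentiableWithinAt
  have hge : ∀ t ∈ interior (Set.Icc N (N + D)),
      α * (α - 1) * (3 * N / 2) ^ (α - 2) * D ≤
        deriv (fun t : ℝ => t ^ α - (t - D) ^ α) t := by
    intro t ht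
    rw [(hder t ht).deriv]
    rw [interior_Icc] at ht
    have hm := psiMono α hα₁ hα₂ (ℓ := N / 2) (B := 3 * N / 2) (by linarith)
    have htd : t - D ∈ Set.Icc (N / 2) (3 * N / 2) := by
      constructor <;> [linarith [ht.1]; linarith [ht.2]]
    have htt : t ∈ Set.Icc (N / 2) (3 * N / 2) := by
      constructor <;> [linarith [ht.1]; linarith [ht.2]]
    have := hm htd htt (by linarith)
    simp only at this
    linarith
  have := (convex_Icc N (N + D)).mul_sub_le_image_sub_of_le_deriv hcont hdiff hge x hx y hy hxy
  linarith

set_option maxHeartbeats 1000000 in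
/-- **Improved counting bound for the projective (high-frequency) region.**
For `1 < α < 2` there are `c ∈ (0,1)` and `C > 0`, depending only on `α`, such that
for all `N ≥ 1`, all `k₂ ≠ k₃` with `|k₂|, |k₃| ≤ cN`, all `ε ∈ (0,1)` and all `μ ∈ ℝ`:
`#{k : |k| > N, |k+k₂−k₃| ≤ N, |Φ_{k+k₂−k₃,k₂,k₃} − μ| ≤ N^ε}
  ≤ C min{1+|k₂−k₃|, N^ε (1 + N^{2−α}/(1+|k₂−k₃|))}`. -/
theorem stmt18 (α : ℝ) (hα₁ : 1 < α) (hα₂ : α < 2) :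
    ∃ c ∈ Set.Ioo (0 : ℝ) 1, ∃ C > 0, ∀ N : ℝ, 1 ≤ N → ∀ k₂ k₃ : ℤ, k₂ ≠ k₃ →
      |(k₂ : ℝ)| ≤ c * N → |(k₃ : ℝ)| ≤ c * N → ∀ ε : ℝ, 0 < ε → ε < 1 → ∀ μ : ℝ,
      (({k : ℤ | N < |(k : ℝ)| ∧ |((k + k₂ - k₃ : ℤ) : ℝ)| ≤ N ∧
          |resPhi α (k + k₂ - k₃) k₂ k₃ - μ| ≤ N ^ ε}.ncard : ℝ)) ≤
        C * min (1 + |((k₂ - k₃ : ℤ) : ℝ)|)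
          (N ^ ε * (1 + N ^ (2 - α) / (1 + |((k₂ - k₃ : ℤ) : ℝ)|))) := by
  have hA : 0 < α * (α - 1) := by nlinarith
  set A := α * (α - 1) with hAdef
  have hC3 : (3 : ℝ) ≤ 3 + 12 / A := by
    have : 0 < 12 / A := div_pos (by norm_num) hA
    linarith
  refine ⟨1/4, ⟨by norm_num, by norm_num⟩, 3 + 12 / A, by linarith, ?_⟩
  intro N hN k₂ k₃ hne h2 h3 ε hε0 hε1 μ
  set C := 3 + 12 / A with hCdef
  have hN0 : (0 : ℝ) < N := lt_of_lt_of_le one_pos hN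
  set E : ℝ := ((k₂ - k₃ : ℤ) : ℝ) with hEdef
  set D : ℝ := |((k₂ - k₃ : ℤ) : ℝ)| with hDdef
  have hD1 : (1 : ℝ) ≤ D := by
    have h0 : k₂ - k₃ ≠ 0 := sub_ne_zero.mpr hne
    have := Int.one_le_abs h0
    rw [hDdef, ← Int.cast_abs]
    exact_mod_cast this
  have hD0 : (0 : ℝ) < D := lt_of_lt_of_le one_pos hD1
  have hDN : D ≤ N / 2 := by
    have : D ≤ |(k₂ : ℝ)| + |(k₃ : ℝ)| := by
      rw [hDdef]; push_cast
      exact (abs_sub _ _)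
    linarith
  set Q : ℝ := N ^ ε with hQdef
  set P : ℝ := N ^ (2 - α) with hPdef
  have hQ1 : (1 : ℝ) ≤ Q := Real.one_le_rpow hN hε0.le
  have hP1 : (1 : ℝ) ≤ P := Real.one_le_rpow hN (by linarith)
  set lam : ℝ := A * (3 * N / 2) ^ (α - 2) * D with hlamdef
  have hlam0 : 0 < lam := by
    apply mul_pos (mul_pos hA (Real.rpow_pos_of_pos (by linarith) _)) hD0
  set m : ℝ := min D (2 * Q / lam) with hmdef
  have hm0 : 0 ≤ m := le_min hD0.le (by positivity)
  set S : Set ℤ := {k : ℤ | N < |(k : ℝ)| ∧ |((k + k₂ - k₃ : ℤ) : ℝ)| ≤ N ∧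
      |resPhi α (k + k₂ - k₃) k₂ k₃ - μ| ≤ N ^ ε} with hSdef
  have hE0 : E ≠ 0 := by
    rw [hEdef]
    exact_mod_cast sub_ne_zero.mpr hne
  -- sign facts
  have hneg : 0 < E → ∀ k ∈ S, (k : ℝ) < -N := by
    intro hEpos k hk
    obtain ⟨h1, h2', _⟩ := hk
    have hc2 : |(k : ℝ) + E| ≤ N := by
      have : ((k + k₂ - k₃ : ℤ) : ℝ) = (k : ℝ) + E := by rw [hEdef]; push_cast; ring
      rwa [this] at h2'
    rcases abs_cases (k : ℝ) with ⟨hc, _⟩ | ⟨hc, _⟩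
    · exfalso
      have : (k : ℝ) + E ≤ |(k : ℝ) + E| := le_abs_self _
      rw [hc] at h1
      linarith
    · rw [hc] at h1; linarith
  have hpos : E < 0 → ∀ k ∈ S, N < (k : ℝ) := by
    intro hEneg k hk
    obtain ⟨h1, h2', _⟩ := hk
    have hc2 : |(k : ℝ) + E| ≤ N := by
      have : ((k + k₂ - k₃ : ℤ) : ℝ) = (k : ℝ) + E := by rw [hEdef]; push_cast; ring
      rwa [this] at h2'
    rcases abs_cases (k : ℝ) with ⟨hc, _⟩ | ⟨hc, _⟩
    · rw [hc] at h1; linarith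
    · exfalso
      have : -((k : ℝ) + E) ≤ |(k : ℝ) + E| := neg_le_abs _
      rw [hc] at h1
      linarith
  -- membership facts
  have hmem : ∀ k ∈ S, N < |(k : ℝ)| ∧ |(k : ℝ)| ≤ N + D ∧
      |(|(k : ℝ)| ^ α - (|(k : ℝ)| - D) ^ α) -
        (|(k₃ : ℝ)| ^ α - |(k₂ : ℝ)| ^ α - μ)| ≤ Q := by
    intro k hk
    obtain ⟨h1, h2', h3'⟩ := hk
    have hcast : ((k + k₂ - k₃ : ℤ) : ℝ) = (k : ℝ) + E := by rw [hEdef]; push_cast; ring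
    have hc2 : |(k : ℝ) + E| ≤ N := by rwa [hcast] at h2'
    have habs : |(k : ℝ) + E| = |(k : ℝ)| - D := by
      rcases lt_or_gt_of_ne hE0 with hEneg | hEpos
      · have hk' := hpos hEneg k ⟨h1, h2', h3'⟩
        have hDE : D = -E := by rw [hDdef, ← hEdef, abs_of_neg hEneg]
        have hk0 : 0 < (k : ℝ) := by linarith
        rw [abs_of_pos hk0, hDE]
        have : 0 < (k : ℝ) + E := by
          have : -E = D := by rw [hDE]
          nlinarith [hDN, hk']
        rw [abs_of_pos this]; ring
      · have hk' := hneg hEpos k ⟨h1, h2', h3'⟩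
        have hDE : D = E := by rw [hDdef, ← hEdef, abs_of_pos hEpos]
        have hk0 : (k : ℝ) < 0 := by linarith
        rw [abs_of_neg hk0, hDE]
        have : (k : ℝ) + E < 0 := by nlinarith [hDN, hk']
        rw [abs_of_neg this]; ring
    refine ⟨h1, by linarith [abs_sub_abs_le_abs_sub ((k : ℝ) + E) E, habs,
      (abs_le.mp hc2).2, le_abs_self E], ?_⟩
    · have hkey : |(k : ℝ)| ^ α - (|(k : ℝ)| - D) ^ α - (|(k₃ : ℝ)| ^ α - |(k₂ : ℝ)| ^ α - μ)
          = -(resPhi α (k + k₂ - k₃) k₂ k₃ - μ) := by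
        have hring : ((k + k₂ - k₃) - k₂ + k₃ : ℤ) = k := by ring
        rw [resPhi, hring, hcast, habs]
        ring
      calc |(|(k : ℝ)| ^ α - (|(k : ℝ)| - D) ^ α) - (|(k₃ : ℝ)| ^ α - |(k₂ : ℝ)| ^ α - μ)|
          = |resPhi α (k + k₂ - k₃) k₂ k₃ - μ| := by rw [sub_sub] at hkey ⊢; rw [hkey, abs_neg]
        _ ≤ Q := h3'
  -- same sign: distance of members equals distance of absolute values
  have hsame : ∀ k ∈ S, ∀ k' ∈ S, |(|(k : ℝ)| - |(k' : ℝ)|)| = |(k : ℝ) - (k' : ℝ)| := by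
    intro k hk k' hk'
    rcases lt_or_gt_of_ne hE0 with hEneg | hEpos
    · have h1 := hpos hEneg k hk
      have h2 := hpos hEneg k' hk'
      rw [abs_of_pos (by linarith : (0:ℝ) < (k:ℝ)), abs_of_pos (by linarith : (0:ℝ) < (k':ℝ))]
    · have h1 := hneg hEpos k hk
      have h2 := hneg hEpos k' hk'
      rw [abs_of_neg (by linarith : (k:ℝ) < 0), abs_of_neg (by linarith : (k':ℝ) < 0)]
      rw [show -(k:ℝ) - -(k':ℝ) = -((k:ℝ) - (k':ℝ)) by ring, abs_neg]
  -- distance bound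
  have hdist : ∀ k ∈ S, ∀ k' ∈ S, |(k : ℝ) - (k' : ℝ)| ≤ m := by
    intro k hk k' hk'
    rw [← hsame k hk k' hk']
    obtain ⟨ha1, ha2, ha3⟩ := hmem k hk
    obtain ⟨hb1, hb2, hb3⟩ := hmem k' hk'
    -- wlog via min/max
    have key : ∀ x y : ℝ, N < x → x ≤ N + D → N < y → y ≤ N + D → x ≤ y →
        |(x ^ α - (x - D) ^ α) - (|(k₃ : ℝ)| ^ α - |(k₂ : ℝ)| ^ α - μ)| ≤ Q →
        |(y ^ α - (y - D) ^ α) - (|(k₃ : ℝ)| ^ α - |(k₂ : ℝ)| ^ α - μ)| ≤ Q →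
        |x - y| ≤ m := by
      intro x y hx1 hx2 hy1 hy2 hxy hxv hyv
      have hsep := sepLem α hα₁ hα₂ hN hD1 hDN ⟨hx1.le, hx2⟩ ⟨hy1.le, hy2⟩ hxy
      have hdiff : (y ^ α - (y - D) ^ α) - (x ^ α - (x - D) ^ α) ≤ 2 * Q := by
        have := abs_sub_abs_le_abs_sub ((y ^ α - (y - D) ^ α) -
          (|(k₃ : ℝ)| ^ α - |(k₂ : ℝ)| ^ α - μ)) ((x ^ α - (x - D) ^ α) -
          (|(k₃ : ℝ)| ^ α - |(k₂ : ℝ)| ^ α - μ))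
        have h4 : (y ^ α - (y - D) ^ α) - (x ^ α - (x - D) ^ α) ≤
            |((y ^ α - (y - D) ^ α) - (|(k₃ : ℝ)| ^ α - |(k₂ : ℝ)| ^ α - μ)) -
             ((x ^ α - (x - D) ^ α) - (|(k₃ : ℝ)| ^ α - |(k₂ : ℝ)| ^ α - μ))| := by
          have := le_abs_self (((y ^ α - (y - D) ^ α) - (|(k₃ : ℝ)| ^ α - |(k₂ : ℝ)| ^ α - μ)) -
             ((x ^ α - (x - D) ^ α) - (|(k₃ : ℝ)| ^ α - |(k₂ : ℝ)| ^ α - μ)))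
          calc (y ^ α - (y - D) ^ α) - (x ^ α - (x - D) ^ α)
              = ((y ^ α - (y - D) ^ α) - (|(k₃ : ℝ)| ^ α - |(k₂ : ℝ)| ^ α - μ)) -
                ((x ^ α - (x - D) ^ α) - (|(k₃ : ℝ)| ^ α - |(k₂ : ℝ)| ^ α - μ)) := by ring
            _ ≤ _ := this
        have h5 := abs_sub ((y ^ α - (y - D) ^ α) - (|(k₃ : ℝ)| ^ α - |(k₂ : ℝ)| ^ α - μ))
          ((x ^ α - (x - D) ^ α) - (|(k₃ : ℝ)| ^ α - |(k₂ : ℝ)| ^ α - μ))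
        linarith
      have hyx : y - x ≤ 2 * Q / lam := by
        rw [le_div_iff₀ hlam0]
        calc (y - x) * lam = lam * (y - x) := by ring
          _ ≤ _ := by rw [hlamdef]; exact le_trans hsep (le_of_eq rfl) |>.trans hdiff
      have hxyD : y - x ≤ D := by linarith
      rw [abs_of_nonpos (by linarith), hmdef]
      rw [neg_sub]
      exact le_min hxyD hyx
    rcases le_total |(k : ℝ)| |(k' : ℝ)| with h | h
    · exact key _ _ ha1 ha2 hb1 hb2 h ha3 hb3
    · rw [abs_sub_comm]
      exact key _ _ hb1 hb2 ha1 ha2 h hb3 ha3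
  -- counting
  have hRHS : (0:ℝ) ≤ C * min (1 + D) (Q * (1 + P / (1 + D))) := by
    apply mul_nonneg (by linarith)
    apply le_min (by linarith) (by positivity)
  rcases S.eq_empty_or_nonempty with hS0 | ⟨k₀, hk₀⟩
  · rw [hS0, Set.ncard_empty]
    exact_mod_cast hRHS
  set M : ℤ := ⌊m⌋ with hMdef
  have hM0 : 0 ≤ M := Int.floor_nonneg.mpr hm0
  have hsub : S ⊆ ↑(Finset.Icc (k₀ - M) (k₀ + M)) := by
    intro k hk
    have h := hdist k hk k₀ hk₀
    have habs : |k - k₀| ≤ M := by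
      rw [hMdef, Int.le_floor]
      push_cast
      exact_mod_cast h
    have := abs_le.mp habs
    simp only [Finset.coe_Icc, Set.mem_Icc]
    omega
  have hcount : (S.ncard : ℝ) ≤ 2 * m + 1 := by
    have h1 : S.ncard ≤ (Finset.Icc (k₀ - M) (k₀ + M)).card := by
      have := Set.ncard_le_ncard hsub (Finset.finite_toSet _)
      rwa [Set.ncard_coe_finset] at this
    have h2 : (Finset.Icc (k₀ - M) (k₀ + M)).card = (2 * M + 1).toNat := by
      rw [Int.card_Icc]; congr 1; ring
    have h3 : ((2 * M + 1).toNat : ℝ) = 2 * (M : ℝ) + 1 := by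
      have h4 : ((2 * M + 1).toNat : ℤ) = 2 * M + 1 := Int.toNat_of_nonneg (by omega)
      exact_mod_cast h4
    calc (S.ncard : ℝ) ≤ ((Finset.Icc (k₀ - M) (k₀ + M)).card : ℝ) := by exact_mod_cast h1
      _ = 2 * (M : ℝ) + 1 := by rw [h2, h3]
      _ ≤ 2 * m + 1 := by linarith [Int.floor_le m]
  -- final arithmetic
  have hlamlb : 2 * A * D / (3 * P) ≤ lam := by
    have hX0 : 0 < (3 * N / 2) ^ (2 - α) := Real.rpow_pos_of_pos (by linarith) _
    have hXub : (3 * N / 2) ^ (2 - α) ≤ 3 / 2 * P := by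
      have h32 : (3 * N / 2 : ℝ) = 3 / 2 * N := by ring
      rw [h32, Real.mul_rpow (by norm_num) hN0.le]
      have : (3 / 2 : ℝ) ^ (2 - α) ≤ (3 / 2 : ℝ) ^ (1 : ℝ) :=
        Real.rpow_le_rpow_of_exponent_le (by norm_num) (by linarith)
      rw [Real.rpow_one] at this
      rw [hPdef]
      nlinarith [Real.rpow_pos_of_pos hN0 (2 - α)]
    have hinv : (3 / 2 * P)⁻¹ ≤ ((3 * N / 2) ^ (2 - α))⁻¹ :=
      inv_anti₀ hX0 hXub
    have hrw : (3 * N / 2) ^ (α - 2) = ((3 * N / 2) ^ (2 - α))⁻¹ := by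
      rw [← Real.rpow_neg (by linarith)]
      congr 1; ring
    rw [hlamdef, hrw]
    have hiv : 2 * A * D / (3 * P) = A * (3 / 2 * P)⁻¹ * D := by
      rw [mul_inv, show ((3:ℝ)/2)⁻¹ = 2/3 by norm_num, inv_eq_one_div]
      field_simp
    rw [hiv]
    apply mul_le_mul_of_nonneg_right _ hD0.le
    exact mul_le_mul_of_nonneg_left hinv hA.le
  have hfrac : 2 * Q / lam ≤ 3 * Q * P / (A * D) := by
    have h0 : 0 < 2 * A * D / (3 * P) := by positivity
    have := div_le_div_of_nonneg_left (by positivity : (0:ℝ) ≤ 2 * Q) h0 hlamlb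
    calc 2 * Q / lam ≤ 2 * Q / (2 * A * D / (3 * P)) := this
      _ = 3 * Q * P / (A * D) := by field_simp
  clear_value A C D Q P lam m
  have hCa : 2 * m + 1 ≤ C * (1 + D) := by
    have h1 : m ≤ D := by rw [hmdef]; exact min_le_left _ _
    nlinarith
  have hCb : 2 * m + 1 ≤ C * (Q * (1 + P / (1 + D))) := by
    have h1 : m ≤ 3 * Q * P / (A * D) := le_trans (by rw [hmdef]; exact min_le_right _ _) hfrac
    have k1 : Q * P / (2 * D) ≤ Q * P / (1 + D) :=
      div_le_div_of_nonneg_left (by positivity) (by linarith) (by linarith)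
    have k2 : (12 / A) * (Q * P / (2 * D)) = 6 * Q * P / (A * D) := by
      field_simp; ring
    have k3 : 6 * Q * P / (A * D) ≤ (12 / A) * (Q * P / (1 + D)) := by
      rw [← k2]
      apply mul_le_mul_of_nonneg_left k1 (by positivity)
    have k4 : (3:ℝ) ≤ C * Q := by nlinarith
    have k5 : (12 / A) * (Q * P / (1 + D)) ≤ C * (Q * P / (1 + D)) := by
      apply mul_le_mul_of_nonneg_right (by linarith) (by positivity)
    have k6 : C * (Q * (1 + P / (1 + D))) = C * Q + C * (Q * P / (1 + D)) := by
      field_simp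
    calc 2 * m + 1 ≤ 2 * (3 * Q * P / (A * D)) + 1 := by linarith
      _ ≤ C * (Q * P / (1 + D)) + 1 := by
        have e1 : 2 * (3 * Q * P / (A * D)) = 6 * Q * P / (A * D) := by ring
        linarith [k3, k5, e1]
      _ ≤ C * (Q * P / (1 + D)) + C * Q - 2 := by linarith [k4]
      _ ≤ C * (Q * (1 + P / (1 + D))) := by rw [k6]; linarith
  calc (S.ncard : ℝ) ≤ 2 * m + 1 := hcount
    _ ≤ C * min (1 + D) (Q * (1 + P / (1 + D))) := by
      rcases le_total (1 + D) (Q * (1 + P / (1 + D))) with h | h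
      · rw [min_eq_left h]; exact hCa
      · rw [min_eq_right h]; exact hCb
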